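/- arXiv:1906.10259 — 4 statements merged into one kernel-verified Lean document; each statement's English description precedes it below -/
import Mathlib

section
/- For each proper nonempty subset S ⊊ {0,...,n}, the vector e(S) with e(S)_i = n+1−|S| for i ∈ S and e(S)_i = −|S| for i ∉ S is an edge vector: its coordinates sum to 0, all pairwise coordinate differences are divisible by n+1, and max e(S) − min e(S) = n+1. Conversely, every edge vector is of this form for a unique proper nonempty subset S. -/
open Finset

/-- The vertex set of the 1-skeleton of the Ã_n Coxeter complex:
integer vectors summing to zero with all pairwise coordinate differences divisible by n+1. -/
def inV (n : ℕ) (x : Fin (n+1) → ℤ) : Prop :=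
  (∑ i, x i = 0) ∧ ∀ i j, ((n : ℤ) + 1) ∣ x i - x j

/-- Maximum coordinate. -/
def maxC (n : ℕ) (x : Fin (n+1) → ℤ) : ℤ := univ.sup' univ_nonempty x

/-- Minimum coordinate. -/
def minC (n : ℕ) (x : Fin (n+1) → ℤ) : ℤ := univ.inf' univ_nonempty x

/-- An edge vector: coordinates sum to 0, pairwise differences divisible by n+1,
and max minus min equals n+1. -/
def isEdge (n : ℕ) (e : Fin (n+1) → ℤ) : Prop :=
  inV n e ∧ maxC n e - minC n e = (n : ℤ) + 1

/-- Height of a vertex: (max − min)/(n+1). -/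
def height (n : ℕ) (x : Fin (n+1) → ℤ) : ℤ :=
  (maxC n x - minC n x) / ((n : ℤ) + 1)

/-- The edge vector associated to a subset S: value n+1−|S| on S and −|S| off S. -/
def eVec (n : ℕ) (S : Finset (Fin (n+1))) : Fin (n+1) → ℤ :=
  fun i => if i ∈ S then (n : ℤ) + 1 - S.card else -(S.card : ℤ)

lemma inV_zero (n : ℕ) : inV n 0 := ⟨by simp, fun i j => by simp⟩

lemma maxC_neg (n : ℕ) (x : Fin (n+1) → ℤ) : maxC n (-x) = - minC n x := by
  unfold maxC minC
  apply le_antisymm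
  · apply Finset.sup'_le
    intro i hi
    have h1 : univ.inf' univ_nonempty x ≤ x i := Finset.inf'_le _ hi
    have h2 : (-x) i = -(x i) := rfl
    omega
  · obtain ⟨i, hi, h⟩ := Finset.exists_mem_eq_inf' (univ_nonempty) x
    rw [h]
    have h1 : (-x) i ≤ univ.sup' univ_nonempty (-x) := Finset.le_sup' (-x) hi
    have h2 : (-x) i = -(x i) := rfl
    omega

lemma minC_neg (n : ℕ) (x : Fin (n+1) → ℤ) : minC n (-x) = - maxC n x := by
  have := maxC_neg n (-x)
  rw [neg_neg] at this
  unfold maxC minC at *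
  omega

lemma isEdge_neg {n : ℕ} {e : Fin (n+1) → ℤ} (h : isEdge n e) : isEdge n (-e) := by
  obtain ⟨⟨h1, h2⟩, h3⟩ := h
  refine ⟨⟨by simp [h1], fun i j => by
    have h' : (-e) i - (-e) j = e j - e i := by
      simp only [Pi.neg_apply]; ring
    rw [h']; exact h2 j i⟩, ?_⟩
  rw [maxC_neg, minC_neg]
  omega

/-- The graph G on V with edge-vector adjacency. -/
def G (n : ℕ) : SimpleGraph {x : Fin (n+1) → ℤ // inV n x} where
  Adj x y := isEdge n (y.1 - x.1)
  symm := by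
    constructor
    intro x y h
    have := isEdge_neg h
    rwa [neg_sub] at this
  loopless := by
    constructor
    intro x h
    obtain ⟨-, h3⟩ := h
    rw [sub_self] at h3
    simp [maxC, minC] at h3
    omega

lemma card_le_of_ne_univ {n : ℕ} {S : Finset (Fin (n+1))} (hSu : S ≠ univ) :
    S.card ≤ n := by
  have h : S ⊂ univ := lt_of_le_of_ne (Finset.subset_univ S) hSu
  have := Finset.card_lt_card h
  simp [Finset.card_univ] at this
  omega

lemma eVec_pos_iff {n : ℕ} {S : Finset (Fin (n+1))} (hS : S.Nonempty) (hSu : S ≠ univ)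
    (i : Fin (n+1)) : i ∈ S ↔ 0 < eVec n S i := by
  have hc1 : 1 ≤ S.card := Finset.one_le_card.mpr hS
  have hc2 : S.card ≤ n := card_le_of_ne_univ hSu
  unfold eVec
  by_cases hi : i ∈ S <;> simp [hi] <;> omega

lemma eVec_isEdge {n : ℕ} {S : Finset (Fin (n+1))} (hS : S.Nonempty) (hSu : S ≠ univ) :
    isEdge n (eVec n S) := by
  have hc1 : 1 ≤ S.card := Finset.one_le_card.mpr hS
  have hc2 : S.card ≤ n := card_le_of_ne_univ hSu
  obtain ⟨i0, hi0⟩ := hS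
  obtain ⟨j0, hj0⟩ : ∃ j, j ∉ S := by
    by_contra h
    push_neg at h
    exact hSu (Finset.eq_univ_iff_forall.mpr h)
  have hsum : ∑ i, eVec n S i = 0 := by
    rw [← Finset.sum_add_sum_compl S]
    have h1 : ∑ i ∈ S, eVec n S i = S.card * ((n : ℤ) + 1 - S.card) := by
      have hcg : ∀ i ∈ S, eVec n S i = (n : ℤ) + 1 - S.card := fun i hi => by
        simp [eVec, hi]
      rw [Finset.sum_congr rfl hcg, Finset.sum_const, nsmul_eq_mul]
    have h2 : ∑ i ∈ Sᶜ, eVec n S i = (Sᶜ.card : ℤ) * (-(S.card : ℤ)) := by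
      have hcg : ∀ i ∈ Sᶜ, eVec n S i = -(S.card : ℤ) := fun i hi => by
        simp [eVec, Finset.mem_compl.mp hi]
      rw [Finset.sum_congr rfl hcg, Finset.sum_const, nsmul_eq_mul]
    rw [h1, h2]
    have h3 : Sᶜ.card = n + 1 - S.card := by
      simp [Finset.card_compl]
    rw [h3]
    have h4 : ((n + 1 - S.card : ℕ) : ℤ) = (n : ℤ) + 1 - S.card := by
      omega
    rw [h4]; ring
  have hdvd : ∀ i j, ((n : ℤ) + 1) ∣ eVec n S i - eVec n S j := by
    intro i j
    have hval : ∀ i, eVec n S i = if i ∈ S then (n:ℤ)+1-S.card else -(S.card:ℤ) :=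
      fun i => rfl
    by_cases hi : i ∈ S <;> by_cases hj : j ∈ S
    · rw [hval, hval, if_pos hi, if_pos hj]; simp
    · rw [hval, hval, if_pos hi, if_neg hj]; exact ⟨1, by ring⟩
    · rw [hval, hval, if_neg hi, if_pos hj]; exact ⟨-1, by ring⟩
    · rw [hval, hval, if_neg hi, if_neg hj]; simp
  have hmax : maxC n (eVec n S) = (n : ℤ) + 1 - S.card := by
    apply le_antisymm
    · apply Finset.sup'_le
      intro i _
      unfold eVec
      by_cases hi : i ∈ S <;> simp [hi] <;> omega
    · have h := Finset.le_sup' (eVec n S) (Finset.mem_univ i0)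
      have h2 : eVec n S i0 = (n:ℤ)+1-S.card := by simp [eVec, hi0]
      unfold maxC
      omega
  have hmin : minC n (eVec n S) = -(S.card : ℤ) := by
    apply le_antisymm
    · have h := Finset.inf'_le (eVec n S) (Finset.mem_univ j0)
      have h2 : eVec n S j0 = -(S.card:ℤ) := by simp [eVec, hj0]
      unfold minC
      omega
    · apply Finset.le_inf'
      intro i _
      unfold eVec
      by_cases hi : i ∈ S <;> simp [hi] <;> omega
  exact ⟨⟨hsum, hdvd⟩, by rw [hmax, hmin]; ring⟩

/-- for every proper nonempty S, e(S) is an edge vector, and every edge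
vector is e(S) for a unique proper nonempty S. -/
theorem stmt3 (n : ℕ) (hn : 1 ≤ n) :
    (∀ S : Finset (Fin (n+1)), S.Nonempty → S ≠ univ → isEdge n (eVec n S)) ∧
    (∀ e : Fin (n+1) → ℤ, isEdge n e →
      ∃! S : Finset (Fin (n+1)), S.Nonempty ∧ S ≠ univ ∧ e = eVec n S) := by
  refine ⟨fun S hS hSu => eVec_isEdge hS hSu, ?_⟩
  intro e he
  obtain ⟨⟨hsum, hdvd⟩, hmm⟩ := he
  set M := maxC n e with hM
  set m := minC n e with hm
  obtain ⟨imax, -, himax⟩ := Finset.exists_mem_eq_sup' (univ_nonempty) e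
  obtain ⟨imin, -, himin⟩ := Finset.exists_mem_eq_inf' (univ_nonempty) e
  have hMval : e imax = M := himax.symm
  have hmval : e imin = m := himin.symm
  have hbound : ∀ i, m ≤ e i ∧ e i ≤ M := fun i =>
    ⟨Finset.inf'_le e (Finset.mem_univ i), Finset.le_sup' e (Finset.mem_univ i)⟩
  have hdich : ∀ i, e i = M ∨ e i = m := by
    intro i
    have h1 := hbound i
    have hd : ((n:ℤ)+1) ∣ M - e i := by rw [← hMval]; exact hdvd imax i
    by_cases h0 : M - e i = 0
    · left; omega
    · have hpos : 0 < M - e i := by omega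
      have := Int.le_of_dvd hpos hd
      right; omega
  set S : Finset (Fin (n+1)) := univ.filter (fun i => e i = M) with hSdef
  have hSmem : ∀ i, i ∈ S ↔ e i = M := by intro i; simp [hSdef]
  have hSne : S.Nonempty := ⟨imax, (hSmem imax).mpr hMval⟩
  have hMne : m ≠ M := by omega
  have hSu : S ≠ univ := by
    intro h
    have := (hSmem imin).mpr
    rw [h] at this
    have h2 : e imin = M := by
      have := Finset.mem_univ imin
      rw [← h] at this
      exact (hSmem imin).mp this
    omega
  have hcompl : ∀ i, i ∉ S → e i = m := by
    intro i hi
    rcases hdich i with h | h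
    · exact absurd ((hSmem i).mpr h) hi
    · exact h
  -- compute m via sum
  have hcard : (Sᶜ.card : ℤ) = (n:ℤ) + 1 - S.card := by
    have h3 : Sᶜ.card = n + 1 - S.card := by simp [Finset.card_compl]
    have hle : S.card ≤ n + 1 := by
      have := Finset.card_le_card (Finset.subset_univ S)
      simpa using this
    omega
  have hsum2 : (S.card : ℤ) * M + ((n:ℤ) + 1 - S.card) * m = 0 := by
    rw [← hsum, ← Finset.sum_add_sum_compl S]
    have h1 : ∑ i ∈ S, e i = (S.card : ℤ) * M := by
      rw [Finset.sum_congr rfl (fun i hi => (hSmem i).mp hi)]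
      simp [mul_comm]
    have h2 : ∑ i ∈ Sᶜ, e i = (Sᶜ.card : ℤ) * m := by
      rw [Finset.sum_congr rfl (fun i hi => hcompl i (Finset.mem_compl.mp hi))]
      simp [mul_comm]
    rw [h1, h2, hcard]
  have hmeq : m = -(S.card : ℤ) := by
    have hMm : M = m + ((n:ℤ) + 1) := by omega
    rw [hMm] at hsum2
    have : ((n:ℤ)+1) * (m + S.card) = 0 := by ring_nf; ring_nf at hsum2; linarith
    have hn1 : ((n:ℤ)+1) ≠ 0 := by positivity
    have := mul_eq_zero.mp this
    omega
  have heq : e = eVec n S := by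
    funext i
    unfold eVec
    by_cases hi : i ∈ S <;> simp [hi]
    · rw [(hSmem i).mp hi]; omega
    · rw [hcompl i hi]; omega
  refine ⟨S, ⟨hSne, hSu, heq⟩, ?_⟩
  intro T ⟨hTne, hTu, hTeq⟩
  ext i
  rw [eVec_pos_iff hTne hTu, eVec_pos_iff hSne hSu, ← hTeq, ← heq]
end

section
/- In the graph G on V = {x ∈ ℤ^{n+1} : Σx_i = 0, x_i ≡ x_j (mod n+1) ∀i,j}, with x adjacent to y iff y−x is an edge vector, the graph distance from any vertex x to the origin equals (max_i x_i − min_j x_j)/(n+1). -/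
open Finset

section Aux

variable {n : ℕ}

lemma minC_le' (x : Fin (n+1) → ℤ) (i : Fin (n+1)) : minC n x ≤ x i :=
  Finset.inf'_le _ (mem_univ i)

lemma le_maxC' (x : Fin (n+1) → ℤ) (i : Fin (n+1)) : x i ≤ maxC n x :=
  Finset.le_sup' _ (mem_univ i)

lemma minC_le_maxC' (x : Fin (n+1) → ℤ) : minC n x ≤ maxC n x :=
  le_trans (minC_le' x 0) (le_maxC' x 0)

lemma dvd_maxC_sub_minC {x : Fin (n+1) → ℤ} (hx : inV n x) :
    ((n : ℤ) + 1) ∣ maxC n x - minC n x := by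
  obtain ⟨i, -, hi⟩ := Finset.exists_mem_eq_sup' (univ_nonempty (α := Fin (n+1))) x
  obtain ⟨j, -, hj⟩ := Finset.exists_mem_eq_inf' (univ_nonempty (α := Fin (n+1))) x
  rw [show maxC n x = x i from hi, show minC n x = x j from hj]
  exact hx.2 i j

lemma adj_delta {x y : {x : Fin (n+1) → ℤ // inV n x}} (h : (G n).Adj x y) :
    maxC n y.1 - minC n y.1 ≤ maxC n x.1 - minC n x.1 + ((n : ℤ) + 1) := by
  obtain ⟨⟨-, -⟩, he⟩ := h
  have h1 : maxC n y.1 ≤ maxC n x.1 + maxC n (y.1 - x.1) := by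
    apply Finset.sup'_le
    intro i _
    have a1 := le_maxC' x.1 i
    have a2 := le_maxC' (y.1 - x.1) i
    have a3 : (y.1 - x.1) i = y.1 i - x.1 i := rfl
    omega
  have h2 : minC n x.1 + minC n (y.1 - x.1) ≤ minC n y.1 := by
    apply Finset.le_inf'
    intro i _
    have a1 := minC_le' x.1 i
    have a2 := minC_le' (y.1 - x.1) i
    have a3 : (y.1 - x.1) i = y.1 i - x.1 i := rfl
    omega
  omega

lemma walk_lb {x y : {x : Fin (n+1) → ℤ // inV n x}} (w : (G n).Walk x y) :
    maxC n x.1 - minC n x.1 ≤ maxC n y.1 - minC n y.1 + ((n : ℤ) + 1) * w.length := by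
  induction w with
  | nil => simp
  | cons h p ih =>
      have h1 := adj_delta h.symm
      rw [SimpleGraph.Walk.length_cons]
      push_cast
      nlinarith [ih]

lemma step_down (x : Fin (n+1) → ℤ) (hx : inV n x) (hne : minC n x ≠ maxC n x) :
    ∃ y : Fin (n+1) → ℤ, inV n y ∧ isEdge n (y - x) ∧
      maxC n y - minC n y = maxC n x - minC n x - ((n : ℤ) + 1) := by
  obtain ⟨i0, -, hi0⟩ := Finset.exists_mem_eq_inf' (univ_nonempty (α := Fin (n+1))) x
  obtain ⟨i1, -, hi1⟩ := Finset.exists_mem_eq_sup' (univ_nonempty (α := Fin (n+1))) x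
  set m := minC n x with hm
  set M := maxC n x with hM
  have hx0 : x i0 = m := hi0.symm
  have hx1 : x i1 = M := hi1.symm
  have hmM : m ≤ M := minC_le_maxC' x
  have hdvd := dvd_maxC_sub_minC hx
  have hnp : (0 : ℤ) < (n : ℤ) + 1 := by positivity
  have hMm : m + ((n : ℤ) + 1) ≤ M := by
    obtain ⟨c, hc⟩ := hdvd
    have hc1 : 1 ≤ c := by nlinarith [lt_of_le_of_ne hmM hne]
    nlinarith
  have key : ∀ i, m < x i → m + ((n : ℤ) + 1) ≤ x i := by
    intro i hi
    obtain ⟨c, hc⟩ := hx.2 i i0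
    rw [hx0] at hc
    have hc1 : 1 ≤ c := by nlinarith
    nlinarith
  set S : Finset (Fin (n+1)) := univ.filter (fun i => m < x i) with hS
  set k : ℤ := (S.card : ℤ) with hk
  have hi1S : i1 ∈ S := by
    rw [hS, mem_filter]
    exact ⟨mem_univ _, by omega⟩
  have hi0S : i0 ∉ S := by
    rw [hS, mem_filter]
    simp [hx0]
  have hk1 : 1 ≤ k := by
    have : 0 < S.card := Finset.card_pos.mpr ⟨i1, hi1S⟩
    omega
  have hkn : S.card ≤ n := by
    have hsub : S ⊆ univ.erase i0 := by
      intro i hi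
      refine Finset.mem_erase.mpr ⟨?_, mem_univ _⟩
      rintro rfl
      exact hi0S hi
    have := Finset.card_le_card hsub
    rwa [Finset.card_erase_of_mem (mem_univ _), card_univ, Fintype.card_fin,
      Nat.add_sub_cancel] at this
  set y : Fin (n+1) → ℤ := fun i => if m < x i then x i - ((n : ℤ) + 1) + k else x i + k with hy
  have hylow : ∀ i, ¬ m < x i → y i = m + k := by
    intro i hi
    have := minC_le' x i
    simp only [hy, if_neg hi]
    omega
  have hyhigh : ∀ i, m < x i → y i = x i - ((n : ℤ) + 1) + k := by
    intro i hi
    simp only [hy, if_pos hi]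
  -- sum of y
  have hsum : ∑ i, y i = 0 := by
    have h1 : ∑ i, y i = ∑ i, x i + ∑ i, (if m < x i then (-((n : ℤ) + 1) + k) else k) := by
      rw [← Finset.sum_add_distrib]
      apply Finset.sum_congr rfl
      intro i _
      simp only [hy]
      split_ifs <;> ring
    rw [h1, hx.1, Finset.sum_ite, Finset.sum_const, Finset.sum_const]
    have hcard : (univ.filter (fun i => ¬ m < x i)).card = (n + 1) - S.card := by
      rw [Finset.filter_not, Finset.card_sdiff_of_subset (Finset.filter_subset _ _), card_univ,
        Fintype.card_fin, hS]
    rw [hcard, ← hS]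
    have hle : S.card ≤ n + 1 := by omega
    have h2 : ((n + 1 - S.card : ℕ) : ℤ) = (n : ℤ) + 1 - k := by
      push_cast [Nat.cast_sub hle]
      rw [hk]
    rw [nsmul_eq_mul, nsmul_eq_mul, h2, ← hk]
    ring
  -- divisibility for y
  have hdvdY : ∀ i j, ((n : ℤ) + 1) ∣ y i - y j := by
    intro i j
    obtain ⟨c, hc⟩ := hx.2 i j
    simp only [hy]
    split_ifs with h1 h2 h2
    · exact ⟨c, by linarith⟩
    · exact ⟨c - 1, by linarith⟩
    · exact ⟨c + 1, by linarith⟩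
    · exact ⟨c, by linarith⟩
  have hyV : inV n y := ⟨hsum, hdvdY⟩
  -- edge vector e = y - x
  have heval : ∀ i, (y - x) i = if m < x i then k - ((n : ℤ) + 1) else k := by
    intro i
    have : (y - x) i = y i - x i := rfl
    rw [this]
    simp only [hy]
    split_ifs <;> ring
  have hemax : maxC n (y - x) = k := by
    apply le_antisymm
    · apply Finset.sup'_le
      intro i _
      rw [heval i]
      split_ifs <;> omega
    · have h1 := le_maxC' (y - x) i0
      rw [heval i0, if_neg (by omega)] at h1
      exact h1
  have hemin : minC n (y - x) = k - ((n : ℤ) + 1) := by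
    apply le_antisymm
    · have h1 := minC_le' (y - x) i1
      rw [heval i1, if_pos (by omega)] at h1
      exact h1
    · apply Finset.le_inf'
      intro i _
      rw [heval i]
      split_ifs <;> omega
  have hedge : isEdge n (y - x) := by
    refine ⟨⟨?_, ?_⟩, by rw [hemax, hemin]; ring⟩
    · have : ∑ i, (y - x) i = ∑ i, y i - ∑ i, x i := by
        rw [← Finset.sum_sub_distrib]
        rfl
      rw [this, hsum, hx.1]
      ring
    · intro i j
      rw [heval i, heval j]
      split_ifs
      · exact ⟨0, by ring⟩
      · exact ⟨-1, by ring⟩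
      · exact ⟨1, by ring⟩
      · exact ⟨0, by ring⟩
  -- new max and min
  have hymax : maxC n y = M - ((n : ℤ) + 1) + k := by
    apply le_antisymm
    · apply Finset.sup'_le
      intro i _
      by_cases hi : m < x i
      · rw [hyhigh i hi]
        have := le_maxC' x i
        omega
      · rw [hylow i hi]
        omega
    · have h1 := le_maxC' y i1
      rw [hyhigh i1 (by omega)] at h1
      omega
  have hymin : minC n y = m + k := by
    apply le_antisymm
    · have h1 := minC_le' y i0
      rw [hylow i0 (by omega)] at h1
      exact h1
    · apply Finset.le_inf'
      intro i _
      by_cases hi : m < x i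
      · rw [hyhigh i hi]
        have := key i hi
        omega
      · rw [hylow i hi]
  exact ⟨y, hyV, hedge, by rw [hymax, hymin]; ring⟩

lemma exists_walk (k : ℕ) :
    ∀ (x : {x : Fin (n+1) → ℤ // inV n x}),
      maxC n x.1 - minC n x.1 = ((n : ℤ) + 1) * k →
      ∃ w : (G n).Walk x ⟨0, inV_zero n⟩, w.length = k := by
  induction k with
  | zero =>
      intro x hx
      have hall : ∀ i, x.1 i = minC n x.1 := by
        intro i
        have h1 := minC_le' x.1 i
        have h2 := le_maxC' x.1 i
        omega
      have hmin : minC n x.1 = 0 := by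
        have hs : ∑ i, x.1 i = ((n : ℤ) + 1) * minC n x.1 := by
          rw [Finset.sum_congr rfl (fun i _ => hall i), Finset.sum_const, card_univ,
            Fintype.card_fin, nsmul_eq_mul]
          push_cast
          ring
        have := x.2.1
        rw [this] at hs
        have hnp : (0 : ℤ) < (n : ℤ) + 1 := by positivity
        nlinarith [hs]
      have hx0 : x = ⟨0, inV_zero n⟩ := by
        apply Subtype.ext
        funext i
        rw [hall i, hmin]
        rfl
      exact ⟨hx0 ▸ SimpleGraph.Walk.nil, by subst hx0; rfl⟩
  | succ k ih =>
      intro x hx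
      have hnp : (0 : ℤ) < (n : ℤ) + 1 := by positivity
      have hne : minC n x.1 ≠ maxC n x.1 := by
        intro h
        rw [← h] at hx
        push_cast at hx
        nlinarith
      obtain ⟨y, hyV, hedge, hdel⟩ := step_down x.1 x.2 hne
      have hadj : (G n).Adj x ⟨y, hyV⟩ := hedge
      obtain ⟨w, hw⟩ := ih ⟨y, hyV⟩ (by push_cast at hx ⊢; linarith)
      exact ⟨SimpleGraph.Walk.cons hadj w, by simp [hw]⟩

end Aux

/-- the graph distance from a vertex to the origin equals
(max − min)/(n+1). -/
theorem stmt4 (n : ℕ) (hn : 1 ≤ n) (x : {x : Fin (n+1) → ℤ // inV n x}) :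
    ((G n).dist x ⟨0, inV_zero n⟩ : ℤ) =
      (maxC n x.1 - minC n x.1) / ((n : ℤ) + 1) := by
  have hnp : (0 : ℤ) < (n : ℤ) + 1 := by positivity
  obtain ⟨k, hk⟩ : ∃ k : ℕ, maxC n x.1 - minC n x.1 = ((n : ℤ) + 1) * k := by
    obtain ⟨c, hc⟩ := dvd_maxC_sub_minC x.2
    have hmM := minC_le_maxC' x.1
    have h0 : 0 ≤ c := by nlinarith
    exact ⟨c.toNat, by rw [hc]; congr 1; omega⟩
  obtain ⟨w, hw⟩ := exists_walk k x hk
  have hub : (G n).dist x ⟨0, inV_zero n⟩ ≤ k := hw ▸ SimpleGraph.dist_le w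
  have hreach : (G n).Reachable x ⟨0, inV_zero n⟩ := ⟨w⟩
  obtain ⟨p, hp⟩ := hreach.exists_walk_length_eq_dist
  have hlb := walk_lb p
  have hz : maxC n ((⟨0, inV_zero n⟩ : {x : Fin (n+1) → ℤ // inV n x}).1) = 0 ∧
      minC n ((⟨0, inV_zero n⟩ : {x : Fin (n+1) → ℤ // inV n x}).1) = 0 := by
    constructor <;> simp [maxC, minC]
  rw [hp, hz.1, hz.2] at hlb
  have hdist : (G n).dist x ⟨0, inV_zero n⟩ = k := by
    have : (k : ℤ) ≤ ((G n).dist x ⟨0, inV_zero n⟩ : ℤ) := by nlinarith [hlb, hk]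
    omega
  rw [hdist, hk, Int.mul_ediv_cancel_left _ (by positivity)]
end

section
/- Let x ∈ V = {x ∈ ℤ^{n+1} : Σx_i = 0, x_i ≡ x_j (mod n+1) ∀i,j} with x ≠ 0. Then there exists an edge vector e such that h(x+e) = h(x) − 1, where h(x) = (max_i x_i − min_j x_j)/(n+1). In particular, one can take e = e(S) for S the set of coordinates achieving the minimum of x. -/
open Finset

/-- for a nonzero vertex there is an edge vector decreasing height;
one can take e(S) for S the set of minimal coordinates. -/
theorem stmt5 (n : ℕ) (hn : 1 ≤ n) (x : Fin (n+1) → ℤ)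
    (hx : inV n x) (hx0 : x ≠ 0) :
    (∃ e : Fin (n+1) → ℤ, isEdge n e ∧ height n (x + e) = height n x - 1) ∧
    (isEdge n (eVec n (univ.filter fun i => x i = minC n x)) ∧
      height n (x + eVec n (univ.filter fun i => x i = minC n x)) = height n x - 1) := by
  obtain ⟨hsum, hdvd⟩ := hx
  set m := minC n x with hm
  set M := maxC n x with hM
  have hpos : (0:ℤ) < (n:ℤ) + 1 := by positivity
  obtain ⟨i₀, -, hi₀⟩ := Finset.exists_mem_eq_inf' (univ_nonempty (α := Fin (n+1))) x
  obtain ⟨j₀, -, hj₀⟩ := Finset.exists_mem_eq_sup' (univ_nonempty (α := Fin (n+1))) x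
  have hxi₀ : x i₀ = m := hi₀.symm
  have hxj₀ : x j₀ = M := hj₀.symm
  have hmle : ∀ i, m ≤ x i := fun i => Finset.inf'_le _ (mem_univ i)
  have hleM : ∀ i, x i ≤ M := fun i => Finset.le_sup' _ (mem_univ i)
  have hmM : m < M := by
    by_contra h
    push_neg at h
    have hall : ∀ i, x i = m := fun i => le_antisymm (h.trans' (hleM i)) (hmle i)
    have hsm : ∑ i, x i = ((n:ℤ)+1) * m := by
      rw [Finset.sum_congr rfl fun i _ => hall i, Finset.sum_const, Finset.card_univ,
        Fintype.card_fin, nsmul_eq_mul]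
      push_cast
      ring
    rw [hsum] at hsm
    have hm0 : m = 0 := by
      rcases mul_eq_zero.mp hsm.symm with h' | h'
      · exfalso; linarith
      · exact h'
    exact hx0 (funext fun i => by rw [hall i, hm0]; rfl)
  have hd : ((n:ℤ)+1) ∣ M - m := by rw [← hxj₀, ← hxi₀]; exact hdvd j₀ i₀
  obtain ⟨k, hk⟩ := hd
  have hk1 : 1 ≤ k := by nlinarith
  have hMm : m + ((n:ℤ)+1) ≤ M := by nlinarith
  set S := (univ.filter fun i => x i = m) with hS
  have hmemS : ∀ i, i ∈ S ↔ x i = m := fun i => by simp [hS]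
  obtain ⟨s, hs⟩ : ∃ s : ℤ, s = (S.card : ℤ) := ⟨_, rfl⟩
  have hi₀S : i₀ ∈ S := (hmemS i₀).mpr hxi₀
  have hj₀S : j₀ ∉ S := by
    intro h
    have := (hmemS j₀).mp h
    rw [hxj₀] at this
    linarith
  have hs1 : 1 ≤ s := by
    have h1 : 0 < S.card := Finset.card_pos.mpr ⟨i₀, hi₀S⟩
    have : (1:ℤ) ≤ (S.card : ℤ) := by exact_mod_cast h1
    linarith [hs ▸ this]
  have hsn : s ≤ n := by
    have hssub : S ⊂ univ := Finset.ssubset_univ_iff.mpr (fun h => hj₀S (h ▸ mem_univ j₀))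
    have h1 := Finset.card_lt_card hssub
    rw [Finset.card_univ, Fintype.card_fin] at h1
    have : (S.card : ℤ) ≤ n := by exact_mod_cast Nat.lt_succ_iff.mp h1
    linarith [hs ▸ this]
  have hkey : ∀ i, i ∉ S → m + ((n:ℤ)+1) ≤ x i := by
    intro i hi
    have hne : x i ≠ m := fun h => hi ((hmemS i).mpr h)
    have h1 : m < x i := lt_of_le_of_ne (hmle i) (Ne.symm hne)
    obtain ⟨c, hc⟩ := hdvd i i₀
    rw [hxi₀] at hc
    have hc1 : 1 ≤ c := by
      by_contra h
      push_neg at h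
      have hc2 : c ≤ 0 := by omega
      nlinarith
    nlinarith
  have heval : ∀ i, eVec n S i = if i ∈ S then (n : ℤ) + 1 - s else -s := by
    intro i
    rw [hs]
    rfl
  have hEdge : isEdge n (eVec n S) := by
    refine ⟨⟨?_, ?_⟩, ?_⟩
    · have h1 : ∑ i ∈ S, eVec n S i = S.card • ((n:ℤ)+1-s) := by
        rw [Finset.sum_congr rfl fun i hi => by rw [heval i, if_pos hi]]
        exact Finset.sum_const _
      have h2 : ∑ i ∈ Sᶜ, eVec n S i = (Sᶜ).card • (-s) := by
        rw [Finset.sum_congr rfl fun i hi => by rw [heval i, if_neg (Finset.mem_compl.mp hi)]]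
        exact Finset.sum_const _
      rw [← Finset.sum_add_sum_compl S, h1, h2, nsmul_eq_mul, nsmul_eq_mul]
      have hcard : ((Sᶜ).card : ℤ) = (n:ℤ) + 1 - s := by
        rw [Finset.card_compl, Fintype.card_fin, hs]
        have h3 : S.card ≤ n + 1 := by simpa using Finset.card_le_univ S
        push_cast [h3]
        ring
      rw [hcard, ← hs]
      ring
    · intro i j
      rw [heval i, heval j]
      by_cases hi : i ∈ S <;> by_cases hj : j ∈ S
      · rw [if_pos hi, if_pos hj, sub_self]; exact dvd_zero _
      · rw [if_pos hi, if_neg hj]; exact ⟨1, by ring⟩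
      · rw [if_neg hi, if_pos hj]; exact ⟨-1, by ring⟩
      · rw [if_neg hi, if_neg hj, sub_self]; exact dvd_zero _
    · have hmax : maxC n (eVec n S) = (n:ℤ) + 1 - s := by
        apply le_antisymm
        · apply Finset.sup'_le
          intro i _
          rw [heval i]
          split_ifs <;> linarith
        · have h1 := Finset.le_sup' (eVec n S) (mem_univ i₀)
          rwa [heval i₀, if_pos hi₀S] at h1
      have hmin : minC n (eVec n S) = -s := by
        apply le_antisymm
        · have h1 := Finset.inf'_le (eVec n S) (mem_univ j₀)
          rwa [heval j₀, if_neg hj₀S] at h1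
        · apply Finset.le_inf'
          intro i _
          rw [heval i]
          split_ifs <;> linarith
      rw [show maxC n (eVec n S) - minC n (eVec n S) = ((n:ℤ)+1-s) - (-s) from by
        rw [hmax, hmin]]
      ring_nf
  have heval2 : ∀ i, (x + eVec n S) i = if i ∈ S then m + ((n : ℤ) + 1 - s) else x i - s := by
    intro i
    by_cases hi : i ∈ S
    · rw [Pi.add_apply, heval i, if_pos hi, if_pos hi, (hmemS i).mp hi]
    · rw [Pi.add_apply, heval i, if_neg hi, if_neg hi]
      ring
  have hmax2 : maxC n (x + eVec n S) = M - s := by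
    apply le_antisymm
    · apply Finset.sup'_le
      intro i _
      rw [heval2 i]
      split_ifs with hi
      · linarith
      · linarith [hleM i]
    · have h1 := Finset.le_sup' (x + eVec n S) (mem_univ j₀)
      rwa [heval2 j₀, if_neg hj₀S, hxj₀] at h1
  have hmin2 : minC n (x + eVec n S) = m + ((n:ℤ) + 1 - s) := by
    apply le_antisymm
    · have h1 := Finset.inf'_le (x + eVec n S) (mem_univ i₀)
      rwa [heval2 i₀, if_pos hi₀S] at h1
    · apply Finset.le_inf'
      intro i _
      rw [heval2 i]
      split_ifs with hi
      · linarith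
      · linarith [hkey i hi]
  have hH : height n (x + eVec n S) = height n x - 1 := by
    unfold height
    rw [show maxC n (x + eVec n S) - minC n (x + eVec n S) = ((n:ℤ)+1) * (k-1) from by
        rw [hmax2, hmin2]; linear_combination hk,
      show maxC n x - minC n x = ((n:ℤ)+1) * k from by rw [← hM, ← hm]; linear_combination hk,
      Int.mul_ediv_cancel_left _ (ne_of_gt hpos), Int.mul_ediv_cancel_left _ (ne_of_gt hpos)]
  exact ⟨⟨eVec n S, hEdge, hH⟩, hEdge, hH⟩
end

section
/- Let x ∈ V and S ⊊ {0,...,n} be proper and nonempty, and let e(S) be the associated edge vector. Then h(x + e(S)) = h(x) − 1 if and only if S contains all coordinates where x attains its minimum and none where x attains its maximum, provided h(x) ≥ 1. -/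
open Finset

/-- for h(x) ≥ 1, adding e(S) decreases height iff S contains all
minimal coordinates and no maximal coordinate. -/
theorem stmt7 (n : ℕ) (hn : 1 ≤ n) (x : Fin (n+1) → ℤ) (hx : inV n x)
    (S : Finset (Fin (n+1))) (hS : S.Nonempty) (hS' : S ≠ univ)
    (hht : 1 ≤ height n x) :
    height n (x + eVec n S) = height n x - 1 ↔
      ((∀ i, x i = minC n x → i ∈ S) ∧ (∀ i, x i = maxC n x → i ∉ S)) := by
  obtain ⟨hsum, hdiv⟩ := hx
  set N : ℤ := (n : ℤ) + 1 with hNdef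
  have hN0 : (0 : ℤ) < N := by positivity
  set s : ℤ := (S.card : ℤ) with hsdef
  set y : Fin (n+1) → ℤ := x + eVec n S with hydef
  have hy : ∀ i, y i = if i ∈ S then x i + N - s else x i - s := by
    intro i
    simp only [hydef, Pi.add_apply, eVec, hNdef, hsdef]
    split <;> ring
  have hxle : ∀ i, x i ≤ maxC n x := fun i => Finset.le_sup' x (mem_univ i)
  have hxge : ∀ i, minC n x ≤ x i := fun i => Finset.inf'_le x (mem_univ i)
  obtain ⟨iM, -, hiM⟩ := Finset.exists_mem_eq_sup' univ_nonempty x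
  obtain ⟨im, -, him⟩ := Finset.exists_mem_eq_inf' univ_nonempty x
  have hiM : maxC n x = x iM := hiM
  have him : minC n x = x im := him
  have hyle : ∀ i, y i ≤ maxC n y := fun i => Finset.le_sup' y (mem_univ i)
  have hyge : ∀ i, minC n y ≤ y i := fun i => Finset.inf'_le y (mem_univ i)
  obtain ⟨jM, -, hjM⟩ := Finset.exists_mem_eq_sup' univ_nonempty y
  obtain ⟨jm, -, hjm⟩ := Finset.exists_mem_eq_inf' univ_nonempty y
  have hjM : maxC n y = y jM := hjM
  have hjm : minC n y = y jm := hjm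
  have hdiv' : ∀ i j, N ∣ x i - x j := hdiv
  have hdivy : ∀ i j, N ∣ y i - y j := by
    intro i j
    obtain ⟨k, hk⟩ := hdiv' i j
    rw [hy i, hy j]
    split_ifs with h1 h2 h3
    · exact ⟨k, by linear_combination hk⟩
    · exact ⟨k + 1, by linear_combination hk⟩
    · exact ⟨k - 1, by linear_combination hk⟩
    · exact ⟨k, by linear_combination hk⟩
  have hDdvd : N ∣ maxC n x - minC n x := by
    rw [hiM, him]; exact hdiv' iM im
  have hD'dvd : N ∣ maxC n y - minC n y := by
    rw [hjM, hjm]; exact hdivy jM jm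
  have hD : height n x * N = maxC n x - minC n x := Int.ediv_mul_cancel hDdvd
  have hD' : height n y * N = maxC n y - minC n y := Int.ediv_mul_cancel hD'dvd
  have key : height n y = height n x - 1 ↔
      maxC n y - minC n y = maxC n x - minC n x - N := by
    constructor
    · intro h
      rw [← hD, ← hD', h]; ring
    · intro h
      have h2 : height n y * N = (height n x - 1) * N := by
        rw [hD', h, ← hD]; ring
      exact mul_right_cancel₀ (ne_of_gt hN0) h2
  rw [key]
  have fwd : ((∀ i, x i = minC n x → i ∈ S) ∧ (∀ i, x i = maxC n x → i ∉ S)) →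
      maxC n y - minC n y = maxC n x - minC n x - N := by
    rintro ⟨hmin, hmax⟩
    have hMy : maxC n y = maxC n x - s := by
      apply le_antisymm
      · apply Finset.sup'_le
        intro i _
        rw [hy i]
        split_ifs with hiS
        · have h1 : x i ≠ maxC n x := fun h => hmax i h hiS
          have h2 : N ∣ maxC n x - x i := by
            rw [hiM]; exact hdiv' iM i
          have h3 : N ≤ maxC n x - x i := by
            refine Int.le_of_dvd ?_ h2
            have := hxle i
            omega
          omega
        · have := hxle i; omega
      · have hiMnS : iM ∉ S := hmax iM hiM.symm
        have : y iM = maxC n x - s := by rw [hy iM, if_neg hiMnS, hiM]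
        rw [← this]; exact hyle iM
    have hmy : minC n y = minC n x + N - s := by
      apply le_antisymm
      · have himS : im ∈ S := hmin im him.symm
        have : y im = minC n x + N - s := by rw [hy im, if_pos himS, him]
        rw [← this]; exact hyge im
      · apply Finset.le_inf'
        intro i _
        rw [hy i]
        split_ifs with hiS
        · have := hxge i; omega
        · have h1 : x i ≠ minC n x := fun h => hiS (hmin i h)
          have h2 : N ∣ x i - minC n x := by
            rw [him]; exact hdiv' i im
          have h3 : N ≤ x i - minC n x := by
            refine Int.le_of_dvd ?_ h2
            have := hxge i
            omega
          omega
    rw [hMy, hmy]; ring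
  have bwd : ¬((∀ i, x i = minC n x → i ∈ S) ∧ (∀ i, x i = maxC n x → i ∉ S)) →
      maxC n x - minC n x ≤ maxC n y - minC n y := by
    intro hc
    rw [not_and_or] at hc
    rcases hc with hc | hc
    · push_neg at hc
      obtain ⟨i, hxi, hiS⟩ := hc
      have h1 : minC n y ≤ minC n x - s := by
        have : y i = minC n x - s := by rw [hy i, if_neg hiS, hxi]
        rw [← this]; exact hyge i
      have h2 : maxC n x - s ≤ maxC n y := by
        have : maxC n x - s ≤ y iM := by
          rw [hy iM, ← hiM]
          split_ifs <;> omega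
        exact le_trans this (hyle iM)
      omega
    · push_neg at hc
      obtain ⟨i, hxi, hiS⟩ := hc
      have h1 : maxC n x + N - s ≤ maxC n y := by
        have : y i = maxC n x + N - s := by rw [hy i, if_pos hiS, hxi]
        rw [← this]; exact hyle i
      have h2 : minC n y ≤ minC n x + N - s := by
        have : y im ≤ minC n x + N - s := by
          rw [hy im, ← him]
          split_ifs <;> omega
        exact le_trans (hyge im) this
      omega
  constructor
  · intro hEq
    by_contra hcon
    have := bwd hcon
    omega
  · exact fwd
end
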